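/- Define Λ̄(λ) = log(C + e^λ) + log((1+C)/C) if e^λ < C², Λ̄(λ) = 2 log(1 + e^{λ/2}) if C² ≤ e^λ ≤ 1/A², and Λ̄(λ) = log(1 + A e^λ) + log((1+A)/A) if e^λ > 1/A², where 0 < A, C and AC < 1. Then Λ̄ is continuous and differentiable on ℝ, and its derivative is Λ̄'(λ) = e^λ/(C + e^λ) for e^λ < C², Λ̄'(λ) = e^{λ/2}/(1 + e^{λ/2}) for C² < e^λ < 1/A², and Λ̄'(λ) = A e^λ/(1 + A e^λ) for e^λ > 1/A². -/

import Mathlib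

/-- The limiting scaled cumulant generating function `Λ̄(λ)` (formula (L0-ans) in the paper). -/
noncomputable def Lbar (A C l : ℝ) : ℝ :=
  if Real.exp l < C ^ 2 then Real.log (C + Real.exp l) + Real.log ((1 + C) / C)
  else if 1 / A ^ 2 < Real.exp l then Real.log (1 + A * Real.exp l) + Real.log ((1 + A) / A)
  else 2 * Real.log (1 + Real.exp (l / 2))

open Real Set Filter

private lemma glue {f g F : ℝ → ℝ} {x d : ℝ} (hf : HasDerivAt f d x) (hg : HasDerivAt g d x)
    (hl : ∀ᶠ y in nhdsWithin x (Iic x), F y = f y)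
    (hr : ∀ᶠ y in nhdsWithin x (Ici x), F y = g y)
    (hxf : F x = f x) (hxg : F x = g x) : HasDerivAt F d x := by
  have h1 : HasDerivWithinAt F d (Iic x) x :=
    hf.hasDerivWithinAt.congr_of_eventuallyEq hl hxf
  have h2 : HasDerivWithinAt F d (Ici x) x :=
    hg.hasDerivWithinAt.congr_of_eventuallyEq hr hxg
  have h3 := h1.union h2
  rw [Iic_union_Ici] at h3
  exact hasDerivWithinAt_univ.mp h3

private lemma exp_half {l c : ℝ} (hc : 0 < c) (h : Real.exp l = c ^ 2) :
    Real.exp (l / 2) = c := by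
  have hl : l = Real.log (c ^ 2) := by rw [← h, Real.log_exp]
  rw [hl, Real.log_pow]
  push_cast
  rw [show (2 : ℝ) * Real.log c / 2 = Real.log c by ring, Real.exp_log hc]

private lemma lbar_hasDerivAt (A C : ℝ) (hA : 0 < A) (hC : 0 < C) (hAC : A * C < 1) (l : ℝ) :
    HasDerivAt (Lbar A C)
      (if Real.exp l < C ^ 2 then Real.exp l / (C + Real.exp l)
       else if 1 / A ^ 2 < Real.exp l then A * Real.exp l / (1 + A * Real.exp l)
       else Real.exp (l / 2) / (1 + Real.exp (l / 2))) l := by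
  have hC2A2 : C ^ 2 < 1 / A ^ 2 := by
    rw [lt_div_iff₀ (by positivity)]
    nlinarith [mul_pos hA hC]
  set f1 : ℝ → ℝ := fun y => Real.log (C + Real.exp y) + Real.log ((1 + C) / C) with hf1def
  set f2 : ℝ → ℝ := fun y => 2 * Real.log (1 + Real.exp (y / 2)) with hf2def
  set f3 : ℝ → ℝ := fun y => Real.log (1 + A * Real.exp y) + Real.log ((1 + A) / A) with hf3def
  have hd1 : ∀ x : ℝ, HasDerivAt f1 (Real.exp x / (C + Real.exp x)) x := by
    intro x
    exact (((Real.hasDerivAt_exp x).const_add C).log (by positivity)).add_const _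
  have hd2 : ∀ x : ℝ, HasDerivAt f2 (Real.exp (x / 2) / (1 + Real.exp (x / 2))) x := by
    intro x
    have h0 : HasDerivAt (fun y : ℝ => y / 2) (1 / 2) x := (hasDerivAt_id x).div_const 2
    have h1 := (((h0.exp).const_add 1).log (by positivity)).const_mul 2
    exact h1.congr_deriv (by ring)
  have hd3 : ∀ x : ℝ, HasDerivAt f3 (A * Real.exp x / (1 + A * Real.exp x)) x := by
    intro x
    exact ((((Real.hasDerivAt_exp x).const_mul A).const_add 1).log (by positivity)).add_const _
  -- open regions
  have hopen1 : IsOpen {y : ℝ | Real.exp y < C ^ 2} := isOpen_Iio.preimage Real.continuous_exp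
  have hopen3 : IsOpen {y : ℝ | 1 / A ^ 2 < Real.exp y} := isOpen_Ioi.preimage Real.continuous_exp
  have hopenM : IsOpen {y : ℝ | C ^ 2 < Real.exp y ∧ Real.exp y < 1 / A ^ 2} :=
    (isOpen_Ioi.preimage Real.continuous_exp).inter (isOpen_Iio.preimage Real.continuous_exp)
  rcases lt_trichotomy (Real.exp l) (C ^ 2) with h | h | h
  · -- region 1
    rw [if_pos h]
    refine (hd1 l).congr_of_eventuallyEq ?_
    filter_upwards [hopen1.mem_nhds h] with y hy
    simp only [Lbar, if_pos hy, hf1def]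
  · -- breakpoint 1 : exp l = C ^ 2
    have hnl : ¬ Real.exp l < C ^ 2 := by rw [h]; exact lt_irrefl _
    have hn3 : ¬ 1 / A ^ 2 < Real.exp l := by rw [h]; exact not_lt.mpr hC2A2.le
    rw [if_neg hnl, if_neg hn3]
    have hec : Real.exp (l / 2) = C := exp_half hC h
    have hx2 : Lbar A C l = f2 l := by simp only [Lbar, if_neg hnl, if_neg hn3, hf2def]
    have hval : f1 l = f2 l := by
      simp only [hf1def, hf2def, h, hec]
      rw [show C + C ^ 2 = C * (1 + C) by ring, Real.log_mul hC.ne' (by positivity),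
        Real.log_div (by positivity) hC.ne']
      ring
    have hf : HasDerivAt f1 (Real.exp (l / 2) / (1 + Real.exp (l / 2))) l := by
      have := hd1 l
      rw [h] at this
      rw [hec]
      convert this using 1
      field_simp
    have hg : HasDerivAt f2 (Real.exp (l / 2) / (1 + Real.exp (l / 2))) l := hd2 l
    refine glue hf hg ?_ ?_ (by rw [hx2, hval]) hx2
    · filter_upwards [self_mem_nhdsWithin] with y (hy : y ≤ l)
      rcases lt_or_eq_of_le hy with hy' | hy'
      · have : Real.exp y < C ^ 2 := by rw [← h]; exact Real.exp_lt_exp.mpr hy'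
        simp only [Lbar, if_pos this, hf1def]
      · subst hy'; rw [hx2, hval]
    · have hev : ∀ᶠ y in nhds l, Real.exp y < 1 / A ^ 2 := by
        refine (isOpen_Iio.preimage Real.continuous_exp).mem_nhds ?_
        simpa [h] using hC2A2
      filter_upwards [eventually_nhdsWithin_of_eventually_nhds hev, self_mem_nhdsWithin]
        with y hy1 (hy2 : l ≤ y)
      have hge : ¬ Real.exp y < C ^ 2 := by
        rw [← h]; exact not_lt.mpr (Real.exp_le_exp.mpr hy2)
      simp only [Lbar, if_neg hge, if_neg (not_lt.mpr hy1.le), hf2def]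
  · rcases lt_trichotomy (Real.exp l) (1 / A ^ 2) with h2 | h2 | h2
    · -- middle region
      rw [if_neg (not_lt.mpr h.le), if_neg (not_lt.mpr h2.le)]
      refine (hd2 l).congr_of_eventuallyEq ?_
      filter_upwards [hopenM.mem_nhds ⟨h, h2⟩] with y hy
      simp only [Lbar, if_neg (not_lt.mpr hy.1.le), if_neg (not_lt.mpr hy.2.le), hf2def]
    · -- breakpoint 2 : exp l = 1 / A ^ 2
      have hnl : ¬ Real.exp l < C ^ 2 := not_lt.mpr h.le
      have hn3 : ¬ 1 / A ^ 2 < Real.exp l := by rw [h2]; exact lt_irrefl _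
      rw [if_neg hnl, if_neg hn3]
      have hinv : Real.exp l = (1 / A) ^ 2 := by rw [h2]; ring
      have hec : Real.exp (l / 2) = 1 / A := exp_half (by positivity) hinv
      have hx2 : Lbar A C l = f2 l := by simp only [Lbar, if_neg hnl, if_neg hn3, hf2def]
      have hval : f3 l = f2 l := by
        simp only [hf3def, hf2def, h2, hec]
        rw [show 1 + A * (1 / A ^ 2) = 1 + 1 / A by field_simp,
          show (1 + A) / A = 1 + 1 / A by field_simp; ring]
        ring
      have hg : HasDerivAt f3 (Real.exp (l / 2) / (1 + Real.exp (l / 2))) l := by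
        have := hd3 l
        rw [h2] at this
        rw [hec]
        convert this using 1
        field_simp
      have hf : HasDerivAt f2 (Real.exp (l / 2) / (1 + Real.exp (l / 2))) l := hd2 l
      refine glue hf hg ?_ ?_ hx2 (by rw [hx2, hval])
      · have hev : ∀ᶠ y in nhds l, C ^ 2 < Real.exp y := by
          refine (isOpen_Ioi.preimage Real.continuous_exp).mem_nhds ?_
          simpa [h2] using hC2A2
        filter_upwards [eventually_nhdsWithin_of_eventually_nhds hev, self_mem_nhdsWithin]
          with y hy1 (hy2 : y ≤ l)
        have hle : ¬ 1 / A ^ 2 < Real.exp y := by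
          rw [← h2]; exact not_lt.mpr (Real.exp_le_exp.mpr hy2)
        simp only [Lbar, if_neg (not_lt.mpr hy1.le), if_neg hle, hf2def]
      · filter_upwards [self_mem_nhdsWithin] with y (hy : l ≤ y)
        rcases lt_or_eq_of_le hy with hy' | hy'
        · have h3' : 1 / A ^ 2 < Real.exp y := by rw [← h2]; exact Real.exp_lt_exp.mpr hy'
          have hge : ¬ Real.exp y < C ^ 2 := not_lt.mpr (hC2A2.le.trans h3'.le)
          simp only [Lbar, if_neg hge, if_pos h3', hf3def]
        · subst hy'; rw [hx2, hval]
    · -- region 3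
      have hnl : ¬ Real.exp l < C ^ 2 := not_lt.mpr (hC2A2.le.trans h2.le)
      rw [if_neg hnl, if_pos h2]
      refine (hd3 l).congr_of_eventuallyEq ?_
      filter_upwards [hopen3.mem_nhds h2] with y hy
      have hge : ¬ Real.exp y < C ^ 2 := not_lt.mpr (hC2A2.le.trans hy.le)
      simp only [Lbar, if_neg hge, if_pos hy, hf3def]

/-- For `A, C > 0` with `AC < 1`, the piecewise function `Λ̄` is continuous and
differentiable on `ℝ`, with derivative given by the three indicated formulas on the
corresponding regions. -/
theorem stmt_8 (A C : ℝ) (hA : 0 < A) (hC : 0 < C) (hAC : A * C < 1) :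
    Continuous (Lbar A C) ∧ Differentiable ℝ (Lbar A C) ∧
    (∀ l : ℝ, Real.exp l < C ^ 2 →
      deriv (Lbar A C) l = Real.exp l / (C + Real.exp l)) ∧
    (∀ l : ℝ, C ^ 2 < Real.exp l → Real.exp l < 1 / A ^ 2 →
      deriv (Lbar A C) l = Real.exp (l / 2) / (1 + Real.exp (l / 2))) ∧
    (∀ l : ℝ, 1 / A ^ 2 < Real.exp l →
      deriv (Lbar A C) l = A * Real.exp l / (1 + A * Real.exp l)) := by
  have hC2A2 : C ^ 2 < 1 / A ^ 2 := by
    rw [lt_div_iff₀ (by positivity)]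
    nlinarith [mul_pos hA hC]
  have hdiff : Differentiable ℝ (Lbar A C) := fun l =>
    (lbar_hasDerivAt A C hA hC hAC l).differentiableAt
  refine ⟨hdiff.continuous, hdiff, ?_, ?_, ?_⟩
  · intro l h
    rw [(lbar_hasDerivAt A C hA hC hAC l).deriv, if_pos h]
  · intro l h1 h2
    rw [(lbar_hasDerivAt A C hA hC hAC l).deriv, if_neg (not_lt.mpr h1.le),
      if_neg (not_lt.mpr h2.le)]
  · intro l h
    rw [(lbar_hasDerivAt A C hA hC hAC l).deriv,
      if_neg (not_lt.mpr (hC2A2.le.trans h.le)), if_pos h]
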